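/- For a positive definite metric, the super-energy tensor T₂(g,ω) of a p-form ω vanishes if and only if ω = 0. -/

import Mathlib

open BigOperators

/-- The super-energy tensor of a form of degree `p+1` on Euclidean `ℝⁿ`
(orthonormal coordinates, indices raised trivially):
`T_{ij} = (1/p!) Σ_k ω_{i k₁…k_p} ω_{j k₁…k_p}
  - (1/(2(p+1)!)) (Σ_k ω_{k₀…k_p}²) δ_{ij}`. -/
noncomputable def superEnergyEuclidean (n p : ℕ)
    (ω : (Fin (p + 1) → Fin n) → ℝ) (i j : Fin n) : ℝ :=
  (1 / (Nat.factorial p : ℝ)) *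
      ∑ k : Fin p → Fin n, ω (Fin.cons i k) * ω (Fin.cons j k)
    - (1 / (2 * (Nat.factorial (p + 1) : ℝ))) *
      (∑ k : Fin (p + 1) → Fin n, ω k ^ 2) * (if i = j then 1 else 0)

/-- For a positive definite (Euclidean) metric, the super-energy tensor of an
alternating form `ω` of degree `p+1 ≤ n` vanishes if and only if `ω = 0`
(with the degenerate case `n = 2(p+1)`, where the trace argument fails,
excluded). -/
theorem superEnergy_eq_zero_iff_form_eq_zero
    (n p : ℕ) (hpn : p + 1 ≤ n) (hdim : n ≠ 2 * (p + 1))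
    (ω : (Fin (p + 1) → Fin n) → ℝ)
    (halt : ∀ (k : Fin (p + 1) → Fin n) (σ : Equiv.Perm (Fin (p + 1))),
      ω (k ∘ σ) = (Equiv.Perm.sign σ : ℤ) * ω k) :
    (∀ i j, superEnergyEuclidean n p ω i j = 0) ↔ ω = 0 := by
  constructor
  · intro h
    set S : ℝ := ∑ k : Fin (p + 1) → Fin n, ω k ^ 2 with hS
    -- trace
    have hsum : ∑ i : Fin n, superEnergyEuclidean n p ω i i = 0 := by
      simp [h]
    have h1 : ∑ i : Fin n, ∑ k : Fin p → Fin n,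
        ω (Fin.cons i k) * ω (Fin.cons i k) = S := by
      rw [hS, ← Fintype.sum_prod_type']
      refine Fintype.sum_equiv (Fin.consEquiv fun _ => Fin n) _ _ ?_
      intro x
      simp [Fin.consEquiv, sq]
    have h2 : (1 / (Nat.factorial p : ℝ)) * S
        - (n : ℝ) * ((1 / (2 * (Nat.factorial (p + 1) : ℝ))) * S) = 0 := by
      rw [← hsum]
      simp only [superEnergyEuclidean, if_pos rfl, mul_one]
      rw [Finset.sum_sub_distrib, ← Finset.mul_sum, h1]
      simp [Finset.sum_const, Finset.card_univ, mul_comm, mul_assoc]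
      exact Or.inl (Or.inl hS)
    have hfac1 : (0:ℝ) < (Nat.factorial p : ℝ) := by
      exact_mod_cast p.factorial_pos
    have hfac2 : ((Nat.factorial (p + 1) : ℕ) : ℝ)
        = ((p : ℝ) + 1) * (Nat.factorial p : ℝ) := by
      rw [Nat.factorial_succ]; push_cast; ring
    have hne : (n : ℝ) ≠ 2 * ((p : ℝ) + 1) := by
      intro hc
      apply hdim
      have : (n : ℝ) = ((2 * (p + 1) : ℕ) : ℝ) := by push_cast; linarith
      exact_mod_cast this
    have hS0 : S = 0 := by
      have hfactor : (1 / (Nat.factorial p : ℝ)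
          - (n : ℝ) * (1 / (2 * (Nat.factorial (p + 1) : ℝ)))) * S = 0 := by
        ring_nf
        ring_nf at h2
        linarith
      rcases mul_eq_zero.mp hfactor with hc | hc
      · exfalso
        have hb : (0:ℝ) < (Nat.factorial (p+1) : ℝ) := by
          exact_mod_cast (p+1).factorial_pos
        rw [sub_eq_zero] at hc
        field_simp at hc
        rw [hfac2] at hc
        apply hne
        nlinarith
      · exact hc
    funext k
    have hnn : ∀ x ∈ Finset.univ, (0:ℝ) ≤ ω x ^ 2 := fun x _ => sq_nonneg _
    have := (Finset.sum_eq_zero_iff_of_nonneg hnn).mp hS0 k (Finset.mem_univ k)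
    have := pow_eq_zero_iff (n := 2) (by norm_num) |>.mp this
    simpa using this
  · intro h i j
    subst h
    simp [superEnergyEuclidean]
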